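/- Let H be a transitive permutation group of rank 3 on a finite set Ω, with subdegrees 1 ≤ u ≤ v (so a point stabilizer has orbits of sizes 1, u, v). If H is imprimitive, then 1 + u divides v. -/
import Mathlib

open Pointwise

private lemma stmt2_arith {u v a b : ℕ} (hu : 1 ≤ u) (huv : u ≤ v)
    (ha : a = 1 ∨ a = u ∨ a = v) (hb : b = 1 ∨ b = u ∨ b = v)
    (hsum : 1 + a + b = 1 + u + v) (hd : (1 + a) ∣ (1 + u + v)) : (1 + u) ∣ v := by
  have hdb : (1 + a) ∣ b := by
    have h1 : (1 + a) ∣ (1 + a) + b := by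
      rw [show (1 + a) + b = 1 + u + v by omega]; exact hd
    exact (Nat.dvd_add_right (dvd_refl _)).mp h1
  rcases ha with rfl | rfl | rfl
  · rcases hb with rfl | rfl | rfl
    · have := Nat.le_of_dvd (by omega) hdb; omega
    · have := Nat.le_of_dvd (by omega) hdb; omega
    · have hu1 : u = 1 := by omega
      rw [hu1]; exact hdb
  · have hbv : b = v := by omega
    rwa [hbv] at hdb
  · have hbu : b = u := by omega
    rw [hbu] at hdb
    have := Nat.le_of_dvd (by omega) hdb
    omega

/-- A transitive, imprimitive permutation group of rank 3 with subdegrees `1 ≤ u ≤ v`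
satisfies `(1+u) ∣ v`. -/
theorem stmt2 {Ω : Type*} [Fintype Ω] (H : Subgroup (Equiv.Perm Ω))
    (htrans : MulAction.IsPretransitive H Ω)
    (ω : Ω) (u v : ℕ) (hu : 1 ≤ u) (huv : u ≤ v)
    (hcard : Fintype.card Ω = 1 + u + v)
    (hrank : Nat.card (MulAction.orbitRel.Quotient (MulAction.stabilizer H ω) Ω) = 3)
    (horb : ∀ x : Ω, (MulAction.orbit (MulAction.stabilizer H ω) x).ncard = 1 ∨
      (MulAction.orbit (MulAction.stabilizer H ω) x).ncard = u ∨
      (MulAction.orbit (MulAction.stabilizer H ω) x).ncard = v)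
    (hexu : ∃ x : Ω, (MulAction.orbit (MulAction.stabilizer H ω) x).ncard = u)
    (hexv : ∃ x : Ω, (MulAction.orbit (MulAction.stabilizer H ω) x).ncard = v)
    (himpr : ∃ B : Set Ω, MulAction.IsBlock H B ∧ 1 < B.ncard ∧ B.ncard < Fintype.card Ω) :
    (1 + u) ∣ v := by
  classical
  letI := htrans
  set S := MulAction.stabilizer H ω with hS
  obtain ⟨B, hB, h1B, hBΩ⟩ := himpr
  have hBne : B.Nonempty := Set.nonempty_of_ncard_ne_zero (by omega)
  obtain ⟨b, hb⟩ := hBne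
  obtain ⟨g, hg⟩ := MulAction.exists_smul_eq H b ω
  set C := g • B with hCdef
  have hCcard : C.ncard = B.ncard := Set.ncard_smul_set g B
  have hCblock : MulAction.IsBlock H C := hB.translate g
  have hωC : ω ∈ C := ⟨b, hb, hg⟩
  -- the stabilizer of ω fixes C
  have hinv : ∀ s : S, (s : H) • C = C := by
    intro s
    apply hCblock.smul_eq_of_mem hωC
    rw [MulAction.mem_stabilizer_iff.mp s.2]
    exact hωC
  -- orbits of points of C are inside C
  have horbsub : ∀ x ∈ C, MulAction.orbit S x ⊆ C := by
    rintro x hx _ ⟨s, rfl⟩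
    have h1 : (s : H) • x ∈ (s : H) • C := Set.smul_mem_smul_set hx
    rwa [hinv s] at h1
  -- the orbit of ω is {ω}
  have horbω : MulAction.orbit S ω = {ω} := by
    apply Set.eq_singleton_iff_unique_mem.mpr
    refine ⟨MulAction.mem_orbit_self ω, ?_⟩
    rintro _ ⟨s, rfl⟩
    exact MulAction.mem_stabilizer_iff.mp s.2
  -- choose x ∈ C, x ≠ ω
  have h1C : 1 < C.ncard := by rwa [hCcard]
  obtain ⟨x, hxC, hxω⟩ := Set.exists_ne_of_one_lt_ncard h1C ω
  -- choose y ∉ C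
  have hylt : C.ncard < Fintype.card Ω := by rwa [hCcard]
  have hyex : ∃ y, y ∉ C := by
    by_contra h
    push_neg at h
    have hC : C = Set.univ := Set.eq_univ_of_forall h
    rw [hC, Set.ncard_univ, Nat.card_eq_fintype_card] at hylt
    omega
  obtain ⟨y, hyC⟩ := hyex
  -- distinctness of the three orbits
  have hO12 : MulAction.orbit S ω ≠ MulAction.orbit S x := by
    intro h
    have : x ∈ MulAction.orbit S ω := MulAction.orbit_eq_iff.mp h.symm
    rw [horbω] at this
    exact hxω this
  have hO13 : MulAction.orbit S ω ≠ MulAction.orbit S y := by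
    intro h
    have : y ∈ MulAction.orbit S ω := MulAction.orbit_eq_iff.mp h.symm
    rw [horbω] at this
    exact hyC (this ▸ hωC)
  have hO23 : MulAction.orbit S x ≠ MulAction.orbit S y := by
    intro h
    apply hyC
    apply horbsub x hxC
    rw [h]
    exact MulAction.mem_orbit_self y
  -- quotient bookkeeping
  have key : ∀ z w : Ω,
      (Quotient.mk (MulAction.orbitRel S Ω) z = Quotient.mk (MulAction.orbitRel S Ω) w) ↔
        MulAction.orbit S z = MulAction.orbit S w := by
    intro z w
    constructor
    · intro h
      exact MulAction.orbit_eq_iff.mpr (MulAction.orbitRel_apply.mp (Quotient.exact h))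
    · intro h
      exact Quotient.sound (MulAction.orbitRel_apply.mpr (MulAction.orbit_eq_iff.mp h))
  haveI : Fintype (MulAction.orbitRel.Quotient S Ω) := Fintype.ofFinite _
  set q1 : MulAction.orbitRel.Quotient S Ω := Quotient.mk (MulAction.orbitRel S Ω) ω with hq1
  set q2 : MulAction.orbitRel.Quotient S Ω := Quotient.mk (MulAction.orbitRel S Ω) x with hq2
  set q3 : MulAction.orbitRel.Quotient S Ω := Quotient.mk (MulAction.orbitRel S Ω) y with hq3
  have h12 : q1 ≠ q2 := fun h => hO12 ((key ω x).mp h)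
  have h13 : q1 ≠ q3 := fun h => hO13 ((key ω y).mp h)
  have h23 : q2 ≠ q3 := fun h => hO23 ((key x y).mp h)
  have huniv : (Finset.univ : Finset (MulAction.orbitRel.Quotient S Ω)) = {q1, q2, q3} := by
    symm
    apply Finset.eq_univ_of_card
    rw [← Nat.card_eq_fintype_card, hrank]
    rw [Finset.card_insert_of_notMem (by simp [h12, h13]),
      Finset.card_insert_of_notMem (by simp [h23]), Finset.card_singleton]
  have hall : ∀ z : Ω, MulAction.orbit S z = MulAction.orbit S ω ∨
      MulAction.orbit S z = MulAction.orbit S x ∨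
      MulAction.orbit S z = MulAction.orbit S y := by
    intro z
    have hz : (Quotient.mk (MulAction.orbitRel S Ω) z : MulAction.orbitRel.Quotient S Ω) ∈
        (Finset.univ : Finset (MulAction.orbitRel.Quotient S Ω)) := Finset.mem_univ _
    rw [huniv] at hz
    simp only [Finset.mem_insert, Finset.mem_singleton] at hz
    rcases hz with h | h | h
    · exact Or.inl ((key z ω).mp h)
    · exact Or.inr (Or.inl ((key z x).mp h))
    · exact Or.inr (Or.inr ((key z y).mp h))
  -- disjointness of distinct orbits
  have gen : ∀ p q : Ω, MulAction.orbit S p ≠ MulAction.orbit S q →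
      Disjoint (MulAction.orbit S p) (MulAction.orbit S q) := by
    intro p q h
    rw [Set.disjoint_left]
    intro z hzp hzq
    exact h ((MulAction.orbit_eq_iff.mpr hzp).symm.trans (MulAction.orbit_eq_iff.mpr hzq))
  -- Ω is covered by the three orbits
  have hcover : (Set.univ : Set Ω) =
      MulAction.orbit S ω ∪ MulAction.orbit S x ∪ MulAction.orbit S y := by
    apply Set.eq_of_subset_of_subset _ (Set.subset_univ _)
    intro z _
    rcases hall z with h | h | h
    · exact Or.inl (Or.inl (h ▸ MulAction.mem_orbit_self z))
    · exact Or.inl (Or.inr (h ▸ MulAction.mem_orbit_self z))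
    · exact Or.inr (h ▸ MulAction.mem_orbit_self z)
  -- counting
  have hcount : (MulAction.orbit S ω).ncard + (MulAction.orbit S x).ncard
      + (MulAction.orbit S y).ncard = 1 + u + v := by
    have hd1 : Disjoint (MulAction.orbit S ω ∪ MulAction.orbit S x) (MulAction.orbit S y) :=
      Set.disjoint_union_left.mpr ⟨gen ω y hO13, gen x y hO23⟩
    have e1 : (Set.univ : Set Ω).ncard = 1 + u + v := by
      rw [Set.ncard_univ, Nat.card_eq_fintype_card, hcard]
    rw [hcover, Set.ncard_union_eq hd1, Set.ncard_union_eq (gen ω x hO12)] at e1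
    exact e1
  -- C is the union of the orbits of ω and x
  have hCeq : C = MulAction.orbit S ω ∪ MulAction.orbit S x := by
    apply Set.Subset.antisymm
    · intro z hz
      rcases hall z with h | h | h
      · exact Or.inl (h ▸ MulAction.mem_orbit_self z)
      · exact Or.inr (h ▸ MulAction.mem_orbit_self z)
      · exfalso
        apply hyC
        apply horbsub z hz
        rw [h]
        exact MulAction.mem_orbit_self y
    · apply Set.union_subset
      · rw [horbω]
        exact Set.singleton_subset_iff.mpr hωC
      · exact horbsub x hxC
  have hCcard2 : C.ncard = 1 + (MulAction.orbit S x).ncard := by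
    rw [hCeq, Set.ncard_union_eq (gen ω x hO12), horbω, Set.ncard_singleton]
  have hdvd : C.ncard ∣ Fintype.card Ω := by
    have h1 := hCblock.ncard_dvd_card ⟨ω, hωC⟩
    rwa [Nat.card_eq_fintype_card] at h1
  rw [hCcard2, hcard] at hdvd
  have h1ω : (MulAction.orbit S ω).ncard = 1 := by rw [horbω, Set.ncard_singleton]
  rw [h1ω] at hcount
  exact stmt2_arith hu huv (horb x) (horb y) hcount hdvd
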